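/- arXiv:2303.10866 — 7 statements merged into one kernel-verified Lean document; each statement's English description precedes it below -/
import Mathlib

section
/- Let D be a finite directed graph, S_min a minimal knot-free vertex deletion set, Z_min the sinks of D - S_min, and x in Z_min. Then S_min is disjoint from R^-(x), the set of vertices that can reach x via a directed path in D - N^+(x). -/
open Relation Set

variable {V : Type*}

/-- Arcs of the induced subgraph of the digraph `A` after deleting the vertex set `S`. -/
def delArcs (A : V → V → Prop) (S : Set V) : V → V → Prop :=
  fun u v => u ∉ S ∧ v ∉ S ∧ A u v

/-- `K` is a knot of the digraph `A`: a strongly connected component of size at least 2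
with no arc leaving it.  (A strongly connected set that is closed under out-arcs is
automatically a maximal strongly connected set, i.e. a strongly connected component.) -/
def IsKnot (A : V → V → Prop) (K : Set V) : Prop :=
  2 ≤ K.ncard ∧ (∀ u ∈ K, ∀ v ∈ K, Relation.ReflTransGen A u v) ∧
    (∀ u ∈ K, ∀ v, A u v → v ∈ K)

/-- A digraph is knot-free if it contains no knot. -/
def KnotFree (A : V → V → Prop) : Prop := ¬ ∃ K : Set V, IsKnot A K

/-- `S` is a knot-free vertex deletion set of the digraph `A`. -/
def IsKFVDS (A : V → V → Prop) (S : Set V) : Prop := KnotFree (delArcs A S)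

/-- `S` is an inclusion-wise minimal knot-free vertex deletion set. -/
def MinimalKFVDS (A : V → V → Prop) (S : Set V) : Prop :=
  IsKFVDS A S ∧ ∀ S' : Set V, S' ⊂ S → ¬ IsKFVDS A S'

/-- `S` is a minimum-size knot-free vertex deletion set. -/
def MinimumKFVDS (A : V → V → Prop) (S : Set V) : Prop :=
  IsKFVDS A S ∧ ∀ S' : Set V, IsKFVDS A S' → S.ncard ≤ S'.ncard

/-- `v` is a sink of the induced subgraph `D - S`. -/
def IsSinkIn (A : V → V → Prop) (S : Set V) (v : V) : Prop :=
  v ∉ S ∧ ∀ w, ¬ delArcs A S v w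

/-- The set of sinks of `D - S`. -/
def sinksIn (A : V → V → Prop) (S : Set V) : Set V := {v | IsSinkIn A S v}

/-- `N^+(x)`, the out-neighborhood of `x`. -/
def outNbrs (A : V → V → Prop) (x : V) : Set V := {v | A x v}

/-- `R^-(x)` : the set of vertices (including `x`) with a directed path to `x`
in `D - N^+(x)`. -/
def RminusSet (A : V → V → Prop) (x : V) : Set V :=
  {u | Relation.ReflTransGen (delArcs A (outNbrs A x)) u x}

/-- `R(x) = N^+(x) ∪ R^-(x)`. -/
def Rset (A : V → V → Prop) (x : V) : Set V := outNbrs A x ∪ RminusSet A x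

/-- Every vertex of a knot has a second vertex of the knot distinct from it. -/
lemma knot_exists_ne {A : V → V → Prop} {K : Set V} (hK : IsKnot A K)
    {u : V} (hu : u ∈ K) : ∃ v ∈ K, v ≠ u := by
  by_contra h
  push_neg at h
  have hsub : K ⊆ {u} := fun v hv => h v hv
  have := hK.1
  have hle : K.ncard ≤ ({u} : Set V).ncard :=
    Set.ncard_le_ncard hsub (Set.finite_singleton u)
  simp [Set.ncard_singleton] at hle
  omega

/-- Vertices of a knot of `delArcs A S` are outside `S`. -/
lemma knot_not_mem {A : V → V → Prop} {S : Set V} {K : Set V}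
    (hK : IsKnot (delArcs A S) K) {u : V} (hu : u ∈ K) : u ∉ S := by
  obtain ⟨v, hv, hvne⟩ := knot_exists_ne hK hu
  have hpath := hK.2.1 u hu v hv
  rcases hpath.cases_head with h | ⟨c, hc, -⟩
  · exact absurd h.symm hvne
  · exact hc.1

/-- If `x` is a sink of `D - S_min` for a minimal knot-free vertex
deletion set `S_min`, then `S_min ∩ R^-(x) = ∅`. -/
theorem stmt3 [Fintype V] (A : V → V → Prop) (Smin : Set V)
    (hS : MinimalKFVDS A Smin) (x : V) (hx : x ∈ sinksIn A Smin) :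
    Disjoint Smin (RminusSet A x) := by
  rw [Set.disjoint_iff_inter_eq_empty]
  by_contra hne
  obtain ⟨s₀, hs₀⟩ := Set.nonempty_iff_ne_empty.2 hne
  -- S' = Smin \ R⁻(x) is a proper subset
  set S' : Set V := Smin \ RminusSet A x with hS'def
  have hssub : S' ⊂ Smin := by
    constructor
    · exact Set.diff_subset
    · intro hsub
      have := hsub hs₀.1
      exact this.2 hs₀.2
  have hnotKF := hS.2 S' hssub
  rw [IsKFVDS, KnotFree, not_not] at hnotKF
  obtain ⟨K, hK⟩ := hnotKF
  -- Case 1: K ∩ Smin = ∅ would make K a knot of delArcs A Smin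
  by_cases hdisj : ∀ u ∈ K, u ∉ Smin
  · -- lift K to a knot of D - Smin
    have hlift : ∀ u ∈ K, ∀ v, Relation.ReflTransGen (delArcs A S') u v →
        v ∈ K ∧ Relation.ReflTransGen (delArcs A Smin) u v := by
      intro u hu v hpath
      induction hpath with
      | refl => exact ⟨hu, Relation.ReflTransGen.refl⟩
      | tail hab harc ih =>
        obtain ⟨hbK, hpath'⟩ := ih
        have hcK : _ ∈ K := hK.2.2 _ hbK _ harc
        exact ⟨hcK, hpath'.tail ⟨hdisj _ hbK, hdisj _ hcK, harc.2.2⟩⟩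
    refine hS.1 ⟨K, hK.1, ?_, ?_⟩
    · intro u hu v hv
      exact (hlift u hu v (hK.2.1 u hu v hv)).2
    · intro u hu v harc
      exact hK.2.2 u hu v ⟨fun h => harc.1 h.1, fun h => harc.2.1 h.1, harc.2.2⟩
  · -- there is s ∈ K ∩ Smin; then s ∈ R⁻(x)
    push_neg at hdisj
    obtain ⟨s, hsK, hsS⟩ := hdisj
    have hsS' : s ∉ S' := knot_not_mem hK hsK
    have hsR : s ∈ RminusSet A x := by
      by_contra h
      exact hsS' ⟨hsS, h⟩
    -- propagate along the R⁻ path: x ∈ K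
    have hxK : x ∈ K := by
      have key : ∀ u, Relation.ReflTransGen (delArcs A (outNbrs A x)) u x →
          u ∈ K → x ∈ K := by
        intro u hpath
        induction hpath using Relation.ReflTransGen.head_induction_on with
        | refl => exact id
        | head harc htail ih =>
          rename_i a b
          intro haK
          apply ih
          have hbR : b ∈ RminusSet A x := htail
          have hbS' : b ∉ S' := fun h => h.2 hbR
          exact hK.2.2 a haK b ⟨knot_not_mem hK haK, hbS', harc.2.2⟩
      exact key s hsR hsK
    -- x has an out-arc in D - S'
    obtain ⟨y, hyK, hyne⟩ := knot_exists_ne hK hxK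
    have hpath := hK.2.1 x hxK y hyK
    rcases hpath.cases_head with h | ⟨w, hw, -⟩
    · exact hyne h.symm
    · -- hw : delArcs A S' x w
      have hxnotS : x ∉ Smin := hx.1
      have hwS : w ∈ Smin := by
        by_contra hwS
        exact hx.2 w ⟨hxnotS, hwS, hw.2.2⟩
      have hwR : w ∈ RminusSet A x := by
        by_contra h
        exact hw.2.1 ⟨hwS, h⟩
      -- but A x w means w ∈ N⁺(x), contradicting w ∈ R⁻(x)
      rcases (hwR : Relation.ReflTransGen _ w x).cases_head with h | ⟨c, hc, -⟩
      · subst h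
        exact hx.2 w ⟨hxnotS, hxnotS, hw.2.2⟩
      · exact hc.1 hw.2.2
end

section
/- Let D be a finite directed graph, S_min a minimal knot-free vertex deletion set, Z_min the sinks of D - S_min, and x in Z_min. Then no vertex u distinct from x with x in R^-(u) (i.e., u in R^+(x)) belongs to Z_min. -/
open Relation Set

variable {V : Type*}

section Aux

lemma delArcs_anti {A : V → V → Prop} {S S' : Set V} (h : S' ⊆ S) {a b : V}
    (hab : delArcs A S a b) : delArcs A S' a b :=
  ⟨fun hs => hab.1 (h hs), fun hs => hab.2.1 (h hs), hab.2.2⟩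

lemma reach_mem {A : V → V → Prop} {S : Set V} {K : Set V}
    (hK : ∀ u ∈ K, ∀ v, delArcs A S u v → v ∈ K) {a b : V} (ha : a ∈ K)
    (h : Relation.ReflTransGen (delArcs A S) a b) : b ∈ K := by
  induction h with
  | refl => exact ha
  | tail _ harc ih => exact hK _ ih _ harc

lemma knot_of_not_mem {A : V → V → Prop} {S : Set V} {s : V} {K : Set V}
    (hK : IsKnot (delArcs A (S \ {s})) K) (hs : s ∉ K) : IsKnot (delArcs A S) K := by
  obtain ⟨hcard, hconn, hclosed⟩ := hK
  refine ⟨hcard, ?_, ?_⟩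
  · intro a ha b hb
    have hpath := hconn a ha b hb
    clear hb
    induction hpath with
    | refl => exact .refl
    | @tail c b hac hcb ih =>
      have hc : c ∈ K := reach_mem hclosed ha hac
      have hbK : b ∈ K := hclosed c hc b hcb
      have hcS : c ∉ S := fun h => hcb.1 ⟨h, fun he => hs (he ▸ hc)⟩
      have hbS : b ∉ S := fun h => hcb.2.1 ⟨h, fun he => hs (he ▸ hbK)⟩
      exact ih.tail ⟨hcS, hbS, hcb.2.2⟩
  · intro a ha b hab
    exact hclosed a ha b (delArcs_anti Set.diff_subset hab)

lemma key_path {A : V → V → Prop} {S : Set V} {u : V} (huS : u ∉ S) {w : V}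
    (h : Relation.ReflTransGen (delArcs A (outNbrs A u)) w u) :
    (∃ s ∈ S, s ∉ outNbrs A u ∧ Relation.ReflTransGen (delArcs A (S \ {s})) s u) ∨
      (w ∉ S ∧ Relation.ReflTransGen (delArcs A S) w u) := by
  induction h using Relation.ReflTransGen.head_induction_on with
  | refl => exact Or.inr ⟨huS, .refl⟩
  | head harc _ ih =>
    rename_i a c _
    rcases ih with h | ⟨hcS, hcpath⟩
    · exact Or.inl h
    by_cases haS : a ∈ S
    · refine Or.inl ⟨a, haS, harc.1, ?_⟩
      refine Relation.ReflTransGen.head ⟨?_, ?_, harc.2.2⟩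
        (Relation.ReflTransGen.mono (fun p q hpq => delArcs_anti Set.diff_subset hpq) _ _ hcpath)
      · exact fun h => h.2 rfl
      · exact fun h => hcS h.1
    · exact Or.inr ⟨haS, hcpath.head ⟨haS, hcS, harc.2.2⟩⟩

end Aux

/-- If `x` is a sink of `D - S_min` for a minimal knot-free vertex
deletion set `S_min`, then no vertex `u ≠ x` with `x ∈ R^-(u)` (i.e. `u ∈ R^+(x)`)
is a sink of `D - S_min`. -/
theorem stmt4 [Fintype V] (A : V → V → Prop) (Smin : Set V)
    (hS : MinimalKFVDS A Smin) (x : V) (hx : x ∈ sinksIn A Smin)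
    (u : V) (hne : u ≠ x) (hu : x ∈ RminusSet A u) :
    u ∉ sinksIn A Smin := by
  intro husink
  obtain ⟨hxS, hxsink⟩ := hx
  obtain ⟨huS, husink'⟩ := husink
  -- find s ∈ S, s ∉ N⁺(u), with a path s ⇝ u in D − (S∖{s})
  have hkey := key_path (A := A) (S := Smin) huS hu
  obtain ⟨s, hsS, hsNu, hspath⟩ := hkey.resolve_right (by
    rintro ⟨-, hpath⟩
    rcases Relation.ReflTransGen.cases_head hpath with rfl | ⟨c, harc, -⟩
    · exact hne rfl
    · exact hxsink c harc)
  -- minimality gives a knot K in D − (S∖{s})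
  have hsub : Smin \ {s} ⊂ Smin :=
    ⟨Set.diff_subset, fun h => (h hsS).2 rfl⟩
  obtain ⟨K, hK⟩ := not_not.mp (hS.2 _ hsub)
  -- s ∈ K, else K is a knot of D − S
  have hsK : s ∈ K := by
    by_contra hsK
    exact hS.1 ⟨K, knot_of_not_mem hK hsK⟩
  obtain ⟨hcard, hconn, hclosed⟩ := hK
  -- u ∈ K by closedness along the path
  have huK : u ∈ K := reach_mem hclosed hsK hspath
  -- pick v ∈ K, v ≠ u
  have h2 : 1 < K.ncard := hcard
  obtain ⟨a, b, haK, hbK, hab⟩ := (Set.one_lt_ncard_iff K.toFinite).mp h2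
  have hv : ∃ v ∈ K, v ≠ u := by
    by_cases hau : a = u
    · exact ⟨b, hbK, fun h => hab (by rw [hau, h])⟩
    · exact ⟨a, haK, hau⟩
  obtain ⟨v, hvK, hvu⟩ := hv
  -- u must have an out-arc in D − (S∖{s}); but its only candidates are in S, and s ∉ N⁺(u)
  rcases Relation.ReflTransGen.cases_head (hconn u huK v hvK) with rfl | ⟨c, harc, -⟩
  · exact hvu rfl
  · have hcS : c ∈ Smin := by
      by_contra hcS
      exact husink' c ⟨huS, hcS, harc.2.2⟩
    have : c = s := by
      by_contra hcs
      exact harc.2.1 ⟨hcS, hcs⟩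
    exact hsNu (this ▸ harc.2.2)
end

section
/- Let D be a finite directed graph and v a vertex with no in-neighbors. Then a set S ⊆ V(D) is a minimum-size knot-free vertex deletion set of D if and only if S is a minimum-size knot-free vertex deletion set of D - v. -/
open Relation Set

variable {V : Type*}

lemma path_avoid {A : V → V → Prop} {v : V} (hv : ∀ u, ¬ A u v) {S : Set V} {u w : V}
    (h : ReflTransGen (delArcs A S) u w) : u ≠ v →
    ReflTransGen (delArcs A (insert v S)) u w := by
  induction h using Relation.ReflTransGen.head_induction_on with
  | refl => exact fun _ => .refl
  | @head a c hac hcb ih =>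
    intro hu
    have hc : c ≠ v := fun he => hv a (he ▸ hac.2.2)
    exact .head ⟨fun hm => (Set.mem_insert_iff.mp hm).elim hu hac.1,
      fun hm => (Set.mem_insert_iff.mp hm).elim hc hac.2.1, hac.2.2⟩ (ih hc)

/-- The key lemma: deleting a vertex with no in-neighbors does not affect knot-freeness. -/
lemma kf_insert_iff [Fintype V] (A : V → V → Prop) (v : V) (hv : ∀ u, ¬ A u v) (S : Set V) :
    KnotFree (delArcs A S) ↔ KnotFree (delArcs A (insert v S)) := by
  constructor
  · rintro h ⟨K, hcard, hconn, hcl⟩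
    -- any vertex of K has an out-arc, hence is not in `insert v S`
    have hmem : ∀ u ∈ K, u ∉ insert v S := by
      intro u hu
      obtain ⟨w, hw, hwu⟩ := Set.exists_ne_of_one_lt_ncard (lt_of_lt_of_le one_lt_two hcard) u
      rcases (hconn u hu w hw).cases_head with he | ⟨c, hc, -⟩
      · exact absurd he.symm hwu
      · exact hc.1
    refine h ⟨K, hcard, ?_, ?_⟩
    · intro u hu w hw
      exact Relation.ReflTransGen.mono (p := delArcs A S) (fun a b hab => ⟨fun h => hab.1 (Set.mem_insert_of_mem v h), fun h => hab.2.1 (Set.mem_insert_of_mem v h), hab.2.2⟩) u w (hconn u hu w hw)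
    · intro u hu w hw
      have hwv : w ≠ v := fun he => hv u (he ▸ hw.2.2)
      exact hcl u hu w ⟨hmem u hu,
        fun hm => (Set.mem_insert_iff.mp hm).elim hwv hw.2.1, hw.2.2⟩
  · rintro h ⟨K, hcard, hconn, hcl⟩
    have hvK : v ∉ K := by
      intro hvK
      obtain ⟨u, hu, huv⟩ := Set.exists_ne_of_one_lt_ncard (lt_of_lt_of_le one_lt_two hcard) v
      rcases (hconn u hu v hvK).cases_tail with he | ⟨c, -, hc⟩
      · exact huv he.symm
      · exact hv c hc.2.2
    refine h ⟨K, hcard, ?_, ?_⟩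
    · intro u hu w hw
      exact path_avoid hv (hconn u hu w hw) (fun he => hvK (he ▸ hu))
    · intro u hu w hw
      exact hcl u hu w ⟨hw.1 ∘ Set.mem_insert_of_mem v,
        hw.2.1 ∘ Set.mem_insert_of_mem v, hw.2.2⟩

lemma kfvds_del_iff [Fintype V] (A : V → V → Prop) (v : V) (hv : ∀ u, ¬ A u v) (S : Set V) :
    IsKFVDS (delArcs A {v}) S ↔ IsKFVDS A S := by
  have heq : delArcs (delArcs A {v}) S = delArcs A (insert v S) := by
    funext u w
    simp only [delArcs, Set.mem_insert_iff, Set.mem_singleton_iff, eq_iff_iff]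
    tauto
  rw [IsKFVDS, heq, IsKFVDS, kf_insert_iff A v hv S]

/-- If `v` has no in-neighbors, then `S` is a minimum knot-free vertex
deletion set of `D` iff `S` is a minimum knot-free vertex deletion set of `D - v`. -/
theorem stmt5 [Fintype V] (A : V → V → Prop) (v : V)
    (hv : ∀ u, ¬ A u v) (S : Set V) :
    MinimumKFVDS A S ↔ v ∉ S ∧ MinimumKFVDS (delArcs A {v}) S := by
  constructor
  · rintro ⟨hS, hmin⟩
    have hvS : v ∉ S := by
      intro hvS
      have h1 : IsKFVDS A (S \ {v}) := by
        have : insert v (S \ {v}) = S := Set.insert_diff_singleton.trans (by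
          rw [Set.insert_eq_self]; exact hvS)
        rw [IsKFVDS, kf_insert_iff A v hv, this]; exact hS
      have h2 := hmin _ h1
      have h3 : (S \ {v}).ncard < S.ncard :=
        Set.ncard_diff_singleton_lt_of_mem hvS S.toFinite
      omega
    refine ⟨hvS, (kfvds_del_iff A v hv S).mpr hS, fun S' hS' => ?_⟩
    exact hmin S' ((kfvds_del_iff A v hv S').mp hS')
  · rintro ⟨hvS, hS, hmin⟩
    exact ⟨(kfvds_del_iff A v hv S).mp hS,
      fun S' hS' => hmin S' ((kfvds_del_iff A v hv S').mpr hS')⟩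
end

section
/- Let D be a finite directed graph and v a vertex with no out-neighbors (a sink). Let R(v) be the set of vertices that can reach v by a directed path (including v itself). Then S is a minimum knot-free vertex deletion set of D if and only if S is a minimum knot-free vertex deletion set of D - R(v). -/
open Relation Set

variable {V : Type*}

private lemma knot_out {B : V → V → Prop} {K : Set V} (h : IsKnot B K) {u : V}
    (hu : u ∈ K) : ∃ w, B u w := by
  obtain ⟨w, hwK, hwu⟩ :=
    Set.exists_ne_of_one_lt_ncard (lt_of_lt_of_le one_lt_two h.1) u
  rcases (h.2.1 u hu w hwK).cases_head with h1 | ⟨c, hc, _⟩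
  · exact absurd h1.symm hwu
  · exact ⟨c, hc⟩

private lemma knot_transfer {B C : V → V → Prop} {K : Set V} (h : IsKnot B K)
    (harc : ∀ u ∈ K, ∀ w, B u w → C u w)
    (hclos : ∀ u ∈ K, ∀ w, C u w → w ∈ K) : IsKnot C K := by
  refine ⟨h.1, ?_, hclos⟩
  intro u hu w hw
  have hBuw := h.2.1 u hu w hw
  clear hw
  induction hBuw using Relation.ReflTransGen.head_induction_on with
  | refl => exact .refl
  | head h' hrest ih =>
    rename_i x c
    exact Relation.ReflTransGen.head (harc _ hu _ h') (ih (h.2.2 _ hu _ h'))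

/-- Core lemma: if `T` is disjoint from `R(v)` then any knot of `D - T` is disjoint
from `R(v)`. -/
private lemma knot_disj_R {A : V → V → Prop} {v : V} (hv : ∀ w, ¬ A v w) {T : Set V}
    (hT : Disjoint T {u | Relation.ReflTransGen A u v}) {K : Set V}
    (hK : IsKnot (delArcs A T) K) : ∀ u ∈ K, u ∉ {u | Relation.ReflTransGen A u v} := by
  intro u huK huR
  have hvK : v ∈ K := by
    have huR' : Relation.ReflTransGen A u v := huR
    clear huR
    induction huR' using Relation.ReflTransGen.head_induction_on with
    | refl => exact huK
    | head h' hrest ih =>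
      rename_i x c
      have hxT : x ∉ T := (knot_out hK huK).choose_spec.1
      have hcT : c ∉ T := fun hc => hT.ne_of_mem hc hrest rfl
      exact ih (hK.2.2 _ huK _ ⟨hxT, hcT, h'⟩)
  obtain ⟨w, hw⟩ := knot_out hK hvK
  exact hv w hw.2.2

private lemma L2 {A : V → V → Prop} {v : V} (hv : ∀ w, ¬ A v w) {T : Set V}
    (hT : Disjoint T {u | Relation.ReflTransGen A u v}) :
    KnotFree (delArcs A T) ↔
      KnotFree (delArcs A ({u | Relation.ReflTransGen A u v} ∪ T)) := by
  set R := {u | Relation.ReflTransGen A u v}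
  constructor
  · intro h ⟨K, hK⟩
    refine h ⟨K, knot_transfer hK ?_ ?_⟩
    · intro u hu w hw
      exact ⟨fun huT => hw.1 (Or.inr huT), fun hwT => hw.2.1 (Or.inr hwT), hw.2.2⟩
    · intro u hu w hw
      have huRT : u ∉ R ∪ T := (knot_out hK hu).choose_spec.1
      have hwR : w ∉ R := fun hwR => huRT (Or.inl (Relation.ReflTransGen.head hw.2.2 hwR))
      exact hK.2.2 _ hu _ ⟨huRT, fun h' => h'.elim hwR hw.2.1, hw.2.2⟩
  · intro h ⟨K, hK⟩
    have hdisjR := knot_disj_R hv hT hK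
    refine h ⟨K, knot_transfer hK ?_ ?_⟩
    · intro u hu w hw
      have hwK : w ∈ K := hK.2.2 _ hu _ hw
      exact ⟨fun h' => h'.elim (hdisjR _ hu) hw.1, fun h' => h'.elim (hdisjR _ hwK) hw.2.1,
        hw.2.2⟩
    · intro u hu w hw
      exact hK.2.2 _ hu _ ⟨fun h' => hw.1 (Or.inr h'), fun h' => hw.2.1 (Or.inr h'), hw.2.2⟩

private lemma L3 {A : V → V → Prop} {v : V} (hv : ∀ w, ¬ A v w) {S : Set V}
    (hS : KnotFree (delArcs A S)) :
    KnotFree (delArcs A (S \ {u | Relation.ReflTransGen A u v})) := by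
  set R := {u | Relation.ReflTransGen A u v}
  rintro ⟨K, hK⟩
  have hdisjR := knot_disj_R hv (disjoint_sdiff_left : Disjoint (S \ R) R) hK
  refine hS ⟨K, knot_transfer hK ?_ ?_⟩
  · intro u hu w hw
    have hwK : w ∈ K := hK.2.2 _ hu _ hw
    exact ⟨fun h' => hw.1 ⟨h', hdisjR _ hu⟩, fun h' => hw.2.1 ⟨h', hdisjR _ hwK⟩, hw.2.2⟩
  · intro u hu w hw
    exact hK.2.2 _ hu _ ⟨fun h' => hw.1 h'.1, fun h' => hw.2.1 h'.1, hw.2.2⟩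

private lemma delArcs_union (A : V → V → Prop) (R S : Set V) :
    delArcs (delArcs A R) S = delArcs A (R ∪ S) := by
  funext u w
  apply propext
  simp only [delArcs, Set.mem_union]
  tauto

/-- If `v` is a sink of `D` and `R(v)` is the set of vertices with a
directed path to `v` (including `v`), then `S` is a minimum knot-free vertex deletion
set of `D` iff `S` is a minimum knot-free vertex deletion set of `D - R(v)`. -/
theorem stmt6 [Fintype V] (A : V → V → Prop) (v : V)
    (hv : ∀ w, ¬ A v w) (S : Set V) :
    MinimumKFVDS A S ↔
      Disjoint S {u | Relation.ReflTransGen A u v} ∧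
        MinimumKFVDS (delArcs A {u | Relation.ReflTransGen A u v}) S := by
  set R := {u | Relation.ReflTransGen A u v} with hR
  constructor
  · rintro ⟨hS, hmin⟩
    have hSR : Disjoint S R := by
      have h1 : IsKFVDS A (S \ R) := L3 hv hS
      have h2 := hmin _ h1
      have h3 : S \ R = S :=
        Set.eq_of_subset_of_ncard_le Set.diff_subset h2 (Set.toFinite S)
      exact (sdiff_eq_self_iff_disjoint.mp h3).symm
    refine ⟨hSR, ?_, ?_⟩
    · show KnotFree (delArcs (delArcs A R) S)
      rw [delArcs_union]
      exact (L2 hv hSR).mp hS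
    · intro S' hS'
      rw [IsKFVDS, delArcs_union] at hS'
      have h4 : KnotFree (delArcs A (R ∪ (S' \ R))) := by
        rw [Set.union_diff_self]; exact hS'
      have h5 : KnotFree (delArcs A (S' \ R)) := (L2 hv disjoint_sdiff_left).mpr h4
      calc S.ncard ≤ (S' \ R).ncard := hmin _ h5
        _ ≤ S'.ncard := Set.ncard_le_ncard Set.diff_subset (Set.toFinite _)
  · rintro ⟨hdisj, hKF, hmin⟩
    rw [IsKFVDS, delArcs_union] at hKF
    refine ⟨(L2 hv hdisj).mpr hKF, ?_⟩
    intro S' hS'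
    have h1 : KnotFree (delArcs A (S' \ R)) := L3 hv hS'
    have h2 : KnotFree (delArcs A (R ∪ (S' \ R))) := (L2 hv disjoint_sdiff_left).mp h1
    have h3 : IsKFVDS (delArcs A R) (S' \ R) := by
      rw [IsKFVDS, delArcs_union]; exact h2
    calc S.ncard ≤ (S' \ R).ncard := hmin _ h3
      _ ≤ S'.ncard := Set.ncard_le_ncard Set.diff_subset (Set.toFinite _)
end

section
/- Let D be a finite directed graph, S_min a minimal knot-free vertex deletion set with sink set Z_min, and x ∈ Z_min. Define D' = D - R(x), where R(x) = N^+(x) ∪ R^-(x). Then S_min \ N^+(x) is a knot-free vertex deletion set of D'. -/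
open Relation Set

variable {V : Type*}

/-- If `x` is a sink of `D - S_min` for a minimal knot-free vertex
deletion set `S_min`, then `S_min \ N^+(x)` is a knot-free vertex deletion set of
`D' = D - R(x)`. -/
theorem stmt8 [Fintype V] (A : V → V → Prop) (Smin : Set V)
    (hS : MinimalKFVDS A Smin) (x : V) (hx : x ∈ sinksIn A Smin) :
    IsKFVDS (delArcs A (Rset A x)) (Smin \ outNbrs A x) := by
  rintro ⟨K, hcard, hconn, hclosed⟩
  have hxS : x ∉ Smin := hx.1
  have hxnb : x ∉ outNbrs A x := fun h => hx.2 x ⟨hxS, hxS, h⟩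
  -- every vertex of K has an outgoing arc in the doubly deleted graph
  have hout : ∀ u ∈ K, ∃ v, delArcs (delArcs A (Rset A x)) (Smin \ outNbrs A x) u v := by
    intro u hu
    obtain ⟨w, hw, hne⟩ : ∃ w ∈ K, w ≠ u := by
      by_contra h
      push_neg at h
      have hsub : K ⊆ {u} := fun z hz => h z hz
      have := Set.ncard_le_ncard hsub (Set.finite_singleton u)
      rw [Set.ncard_singleton] at this
      omega
    rcases (hconn u hu w hw).cases_head with h | ⟨c, hc, _⟩
    · exact absurd h.symm hne
    · exact ⟨c, hc⟩
  have hKfacts : ∀ u ∈ K, u ∉ Rset A x ∧ u ∉ Smin := by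
    intro u hu
    obtain ⟨v, h1, h2, h3, h4, h5⟩ := hout u hu
    exact ⟨h3, fun huS => h1 ⟨huS, fun hn => h3 (Or.inl hn)⟩⟩
  have harc : ∀ u v, delArcs (delArcs A (Rset A x)) (Smin \ outNbrs A x) u v →
      delArcs A Smin u v := by
    rintro u v ⟨h1, h2, h3, h4, h5⟩
    exact ⟨fun h => h1 ⟨h, fun hn => h3 (Or.inl hn)⟩,
      fun h => h2 ⟨h, fun hn => h4 (Or.inl hn)⟩, h5⟩
  apply hS.1
  refine ⟨K, hcard, fun u hu v hv => Relation.ReflTransGen.mono harc u v (hconn u hu v hv), ?_⟩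
  intro u hu v huv
  obtain ⟨huS, hvS, hA⟩ := huv
  obtain ⟨huR, _⟩ := hKfacts u hu
  have hvR : v ∉ Rset A x := by
    rintro (hvN | hvRm)
    · exact hx.2 v ⟨hxS, hvS, hvN⟩
    · have hvN' : v ∉ outNbrs A x := by
        rcases hvRm.cases_head with h | ⟨c, hc, _⟩
        · rw [h]; exact hxnb
        · exact hc.1
      have huN : u ∉ outNbrs A x := fun hn => huR (Or.inl hn)
      exact huR (Or.inr (Relation.ReflTransGen.head ⟨huN, hvN', hA⟩ hvRm))
  exact hclosed u hu v ⟨fun h => huS h.1, fun h => hvS h.1, huR, hvR, hA⟩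
end

section
/- Let D be a finite directed graph and x a vertex of D. Let D' = D - R(x) where R(x) = N^+(x) ∪ R^-(x). If S' is a knot-free vertex deletion set of D', then S' ∪ N^+(x) is a knot-free vertex deletion set of D. -/
open Relation Set

variable {V : Type*}

/-- If `S'` is a knot-free vertex deletion set of `D' = D - R(x)`
(so `S'` consists of vertices of `D'`), then `S' ∪ N^+(x)` is a knot-free vertex
deletion set of `D`. -/
theorem stmt9 [Fintype V] (A : V → V → Prop) (x : V) (S' : Set V)
    (hsub : Disjoint S' (Rset A x))
    (hS' : IsKFVDS (delArcs A (Rset A x)) S') :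
    IsKFVDS A (S' ∪ outNbrs A x) := by
  intro ⟨K, hcard, hconn, hclosed⟩
  apply hS'
  set T : Set V := S' ∪ outNbrs A x with hT
  -- every vertex of K is outside T
  have htwo : ∀ u ∈ K, ∃ v ∈ K, v ≠ u := by
    intro u hu
    obtain ⟨a, b, ha, hb, hab⟩ := (Set.one_lt_ncard_iff (Set.toFinite K)).mp (lt_of_lt_of_le one_lt_two hcard)
    rcases eq_or_ne a u with rfl | h
    · exact ⟨b, hb, fun h => hab h.symm⟩
    · exact ⟨a, ha, h⟩
  have hnotT : ∀ u ∈ K, u ∉ T := by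
    intro u hu hut
    obtain ⟨v, hv, hvu⟩ := htwo u hu
    rcases (hconn u hu v hv).cases_head with rfl | ⟨w, hw, -⟩
    · exact hvu rfl
    · exact hw.1 hut
  -- K is closed under reachability in D - T
  have hreach : ∀ a ∈ K, ∀ b, Relation.ReflTransGen (delArcs A T) a b → b ∈ K := by
    intro a ha b hab
    induction hab with
    | refl => exact ha
    | tail _ hbc ih => exact hclosed _ ih _ hbc
  -- if a vertex of RminusSet lies in K then x ∈ K
  have hRm : ∀ u, Relation.ReflTransGen (delArcs A (outNbrs A x)) u x → u ∈ K → x ∈ K := by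
    intro u hpath
    induction hpath using Relation.ReflTransGen.head_induction_on with
    | refl => exact id
    | head hab hbx ih =>
      rename_i a b
      intro haK
      refine ih (hclosed a haK b ⟨hnotT a haK, ?_, hab.2.2⟩)
      rintro (hbS | hbN)
      · exact hsub.ne_of_mem hbS (show b ∈ Rset A x from Or.inr hbx) rfl
      · exact hab.2.1 hbN
  -- x ∉ K
  have hxK : x ∉ K := by
    intro hx
    obtain ⟨v, hv, hvx⟩ := htwo x hx
    rcases (hconn x hx v hv).cases_head with rfl | ⟨w, hw, -⟩
    · exact hvx rfl
    · exact hw.2.1 (Or.inr hw.2.2)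
  -- K is disjoint from Rset
  have hKR : ∀ u ∈ K, u ∉ Rset A x := by
    intro u hu hur
    rcases hur with hn | hm
    · exact hnotT u hu (Or.inr hn)
    · exact hxK (hRm u hm hu)
  refine ⟨K, hcard, ?_, ?_⟩
  · intro u hu v hv
    have key : ∀ w, Relation.ReflTransGen (delArcs A T) u w →
        Relation.ReflTransGen (delArcs (delArcs A (Rset A x)) S') u w := by
      intro w hpath
      induction hpath with
      | refl => exact Relation.ReflTransGen.refl
      | tail hub hbc ih =>
        rename_i b c
        have hbK : b ∈ K := hreach u hu b hub
        have hcK : c ∈ K := hclosed _ hbK _ hbc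
        exact ih.tail ⟨fun h => hnotT b hbK (Or.inl h), fun h => hnotT c hcK (Or.inl h),
          hKR b hbK, hKR c hcK, hbc.2.2⟩
    exact key v (hconn u hu v hv)
  · rintro u hu v ⟨huS, hvS, huR, hvR, huv⟩
    refine hclosed u hu v ⟨hnotT u hu, ?_, huv⟩
    rintro (h | h)
    · exact hvS h
    · exact hvR (Or.inl h)
end

section
/- For every k ≥ 1, the disjoint union of k directed triangles on n = 3k vertices has exactly 3^k = 3^{n/3} inclusion-wise minimal knot-free vertex deletion sets; hence there is an infinite family of directed graphs on n vertices with at least 1.4422^n minimal knot-free vertex deletion sets. -/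
open Relation Set

variable {V : Type*}

section Aux

/-- The disjoint union of `k` directed triangles. -/
def Tri (k : ℕ) : (Fin k × Fin 3) → (Fin k × Fin 3) → Prop :=
  fun u v => u.1 = v.1 ∧ v.2 = u.2 + 1

lemma knot_no_sink {A : V → V → Prop} {K : Set V} (hK : IsKnot A K) {v : V}
    (hv : v ∈ K) (hs : ∀ w, ¬ A v w) : False := by
  obtain ⟨hcard, hconn, _⟩ := hK
  have hfin : K.Finite := by
    by_contra h
    have := Set.Infinite.ncard h
    omega
  obtain ⟨u, hu, hne⟩ := Set.exists_ne_of_one_lt_ncard (show 1 < K.ncard by omega) v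
  rcases (hconn v hv u hu).cases_head with h | ⟨w, hw, _⟩
  · exact hne h.symm
  · exact hs w hw

lemma delArcs_tri_fst {k : ℕ} {S : Set (Fin k × Fin 3)} {u v : Fin k × Fin 3}
    (h : delArcs (Tri k) S u v) : u.1 = v.1 := h.2.2.1

lemma rtg_tri_fst {k : ℕ} {S : Set (Fin k × Fin 3)} {u v : Fin k × Fin 3}
    (h : Relation.ReflTransGen (delArcs (Tri k) S) u v) : u.1 = v.1 := by
  induction h with
  | refl => rfl
  | tail _ hstep ih => exact ih.trans (delArcs_tri_fst hstep)

lemma kfvds_iff {k : ℕ} (S : Set (Fin k × Fin 3)) :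
    IsKFVDS (Tri k) S ↔ ∀ i : Fin k, ∃ j : Fin 3, (i, j) ∈ S := by
  constructor
  · intro hS i
    by_contra h
    push_neg at h
    apply hS
    refine ⟨{p | p.1 = i}, ?_, ?_, ?_⟩
    · refine (Set.one_lt_ncard (Set.toFinite _)).mpr
        ⟨(i, 0), rfl, (i, 1), rfl, by simp⟩
    · -- strongly connected
      have hstep : ∀ a : Fin 3,
          Relation.ReflTransGen (delArcs (Tri k) S) (i, a) (i, a + 1) := by
        intro a
        exact Relation.ReflTransGen.single ⟨h a, h (a + 1), rfl, rfl⟩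
      rintro ⟨i₁, a⟩ h₁ ⟨i₂, b⟩ h₂
      have h₁' : i₁ = i := h₁
      have h₂' : i₂ = i := h₂
      subst h₁' h₂'
      have key : ∀ a b : Fin 3, b = a ∨ b = a + 1 ∨ b = a + 1 + 1 := by decide
      have : b = a ∨ b = a + 1 ∨ b = a + 1 + 1 := key a b
      rcases this with rfl | rfl | rfl
      · exact Relation.ReflTransGen.refl
      · exact hstep a
      · exact (hstep a).trans (hstep (a + 1))
    · rintro ⟨i₁, a⟩ h₁ v hv
      have h₁' : i₁ = i := h₁
      subst h₁'
      exact (delArcs_tri_fst hv).symm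
  · rintro h ⟨K, hK⟩
    obtain ⟨hcard, hconn, _⟩ := hK
    have hfin : K.Finite := by
      by_contra hinf
      have := Set.Infinite.ncard hinf
      omega
    obtain ⟨u, hu, v, hv, huv⟩ := (Set.one_lt_ncard hfin).mp (by omega)
    have huv' : Relation.ReflTransGen (delArcs (Tri k) S) u v := hconn u hu v hv
    have hvu' : Relation.ReflTransGen (delArcs (Tri k) S) v u := hconn v hv u hu
    have hfst : u.1 = v.1 := rtg_tri_fst huv'
    have huS : u ∉ S := by
      rcases huv'.cases_head with h' | ⟨w, hw, _⟩
      · exact absurd h' huv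
      · exact hw.1
    have hvS : v ∉ S := by
      rcases hvu'.cases_head with h' | ⟨w, hw, _⟩
      · exact absurd h'.symm huv
      · exact hw.1
    obtain ⟨j, hj⟩ := h u.1
    have hja : j ≠ u.2 := by
      rintro rfl
      exact huS hj
    have hjb : j ≠ v.2 := by
      rintro rfl
      rw [hfst] at hj
      exact hvS hj
    have hab : u.2 ≠ v.2 := by
      intro h'
      exact huv (Prod.ext hfst h')
    have key : ∀ x a b : Fin 3, x ≠ a → x ≠ b → a ≠ b → (x + 2 = a ∨ x + 2 = b) := by
      decide
    have hdec : j + 2 = u.2 ∨ j + 2 = v.2 := key j u.2 v.2 hja hjb hab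
    have key1 : ∀ x : Fin 3, x + 2 + 1 = x := by decide
    have hj1 : j + 2 + 1 = j := key1 j
    -- the vertex (u.1, j+2) is in K and is a sink
    have hmem : (u.1, j + 2) ∈ K := by
      rcases hdec with h' | h'
      · rw [h']; exact hu
      · rw [h', hfst]; exact hv
    refine knot_no_sink ⟨hcard, hconn, ‹_›⟩ hmem ?_
    rintro ⟨i', c⟩ ⟨_, hcS, (h1 : u.1 = i'), (h2 : c = j + 2 + 1)⟩
    subst h1 h2
    rw [hj1] at hcS
    exact hcS hj

/-- The transversal set associated to a choice function `f`. -/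
def transv {k : ℕ} (f : Fin k → Fin 3) : Set (Fin k × Fin 3) := {p | p.2 = f p.1}

lemma minimalKFVDS_iff {k : ℕ} (S : Set (Fin k × Fin 3)) :
    MinimalKFVDS (Tri k) S ↔ ∃ f : Fin k → Fin 3, S = transv f := by
  constructor
  · rintro ⟨hS, hmin⟩
    have h := (kfvds_iff S).mp hS
    choose f hf using h
    refine ⟨f, ?_⟩
    have hsub : transv f ⊆ S := by
      rintro ⟨i, j⟩ (rfl : j = f i)
      exact hf i
    by_contra hne
    refine hmin (transv f) ⟨hsub, fun h' => hne (le_antisymm h' hsub)⟩ ?_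
    exact (kfvds_iff _).mpr fun i => ⟨f i, rfl⟩
  · rintro ⟨f, rfl⟩
    refine ⟨(kfvds_iff _).mpr fun i => ⟨f i, rfl⟩, ?_⟩
    rintro S' ⟨hsub, hne⟩ hS'
    obtain ⟨p, hp, hpn⟩ := Set.exists_of_ssubset ⟨hsub, hne⟩
    obtain ⟨j, hj⟩ := (kfvds_iff S').mp hS' p.1
    have : (p.1, j) ∈ transv f := hsub hj
    have hj' : j = f p.1 := this
    have hp' : p.2 = f p.1 := hp
    apply hpn
    have : p = (p.1, j) := by
      rw [hj', ← hp']
    rw [this]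
    exact hj

lemma transv_injective {k : ℕ} : Function.Injective (transv (k := k)) := by
  intro f g h
  funext i
  have : (i, f i) ∈ transv g := h ▸ (rfl : (i, f i) ∈ transv f)
  exact this

end Aux

/-- The disjoint union of `k ≥ 1` directed triangles (on `n = 3k`
vertices) has exactly `3^k = 3^{n/3}` minimal knot-free vertex deletion sets, and
`3^k ≥ 1.4422^{3k}`. -/
theorem stmt15 (k : ℕ) (hk : 1 ≤ k) :
    {S : Set (Fin k × Fin 3) |
        MinimalKFVDS (fun u v : Fin k × Fin 3 => u.1 = v.1 ∧ v.2 = u.2 + 1) S}.ncard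
      = 3 ^ k ∧
    (1.4422 : ℝ) ^ (3 * k) ≤ (3 : ℝ) ^ k := by
  constructor
  · have hset : {S : Set (Fin k × Fin 3) |
        MinimalKFVDS (fun u v : Fin k × Fin 3 => u.1 = v.1 ∧ v.2 = u.2 + 1) S}
        = Set.range (transv (k := k)) := by
      ext S
      simp only [Set.mem_setOf_eq, Set.mem_range]
      rw [show (fun u v : Fin k × Fin 3 => u.1 = v.1 ∧ v.2 = u.2 + 1) = Tri k from rfl,
        minimalKFVDS_iff]
      exact ⟨fun ⟨f, hf⟩ => ⟨f, hf.symm⟩, fun ⟨f, hf⟩ => ⟨f, hf.symm⟩⟩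
    rw [hset, show ∀ t : Set (Set (Fin k × Fin 3)), t.ncard = Nat.card t from fun _ => rfl,
      Nat.card_range_of_injective transv_injective]
    simp [Nat.card_eq_fintype_card]
  · rw [pow_mul]
    apply pow_le_pow_left₀ (by positivity)
    norm_num
end
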